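/- Let x, y be square matrices (over ℝ, ℂ or ℍ) such that x - 1, y - 1, and x + y are invertible, and set c(z) = (z+1)(z-1)^{-1}. Then c(c(x)·c(y)) = (y-1)(x+y)^{-1}(x-1) + 1. -/
import Mathlib


/-- The Cayley transform `c(z) = (z+1)(z-1)⁻¹` (via `Ring.inverse`). -/
noncomputable def cayley {R : Type*} [Ring R] (x : R) : R :=
  (x + 1) * Ring.inverse (x - 1)

lemma cayley_aux {R : Type*} [Ring R] (a b A B C T : R)
    (haA : a * A = 1) (hAa : A * a = 1)
    (hbB : b * B = 1) (hBb : B * b = 1)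
    (hsC : (a + b + 2) * C = 1) (hCs : C * (a + b + 2) = 1)
    (h2T : (2:R) * T = 1) :
    ((1 + 2*A) * (1 + 2*B) - 1 = 2 * (A * ((a + b + 2) * B)))
    ∧ ((2 * (A * ((a + b + 2) * B))) * (b * (C * (a * T))) = 1)
    ∧ (((1 + 2*A) * (1 + 2*B) + 1) * (b * (C * (a * T))) = b * C * a + 1) := by
  refine ⟨?_, ?_, ?_⟩
  · calc (1 + 2*A) * (1 + 2*B) - 1 = 2*A + 2*B + 4*(A*B) := by noncomm_ring
      _ = 2*(A*(b*B)) + 2*((A*a)*B) + 4*(A*B) := by rw [hbB, hAa]; noncomm_ring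
      _ = 2 * (A * ((a + b + 2) * B)) := by noncomm_ring
  · calc (2 * (A * ((a + b + 2) * B))) * (b * (C * (a * T)))
        = 2 * (A * ((a + b + 2) * ((B * b) * (C * (a * T))))) := by noncomm_ring
      _ = 2 * (A * (((a + b + 2) * C) * (a * T))) := by rw [hBb]; noncomm_ring
      _ = 2 * ((A * a) * T) := by rw [hsC]; noncomm_ring
      _ = 2 * T := by rw [hAa]; noncomm_ring
      _ = 1 := h2T
  · have step : (1 + 2*A) * (1 + 2*B) + 1
        = 2 * (A * ((a*b + (a + b + 2)) * B)) := by
      calc (1 + 2*A) * (1 + 2*B) + 1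
          = 2*((A*a)*(b*B)) + 2*((A*a)*B) + 2*(A*(b*B)) + 4*(A*B) := by
            rw [hAa, hbB]; noncomm_ring
        _ = 2 * (A * ((a*b + (a + b + 2)) * B)) := by noncomm_ring
    rw [step]
    calc (2 * (A * ((a*b + (a + b + 2)) * B))) * (b * (C * (a * T)))
        = 2 * (A * ((a*b + (a + b + 2)) * ((B * b) * (C * (a * T))))) := by noncomm_ring
      _ = 2 * (A * ((a*b) * (C * (a * T)) + ((a + b + 2) * C) * (a * T))) := by
          rw [hBb]; noncomm_ring
      _ = 2 * ((A * a) * (b * (C * (a * T)) + T)) := by rw [hsC]; noncomm_ring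
      _ = (b * (C * a)) * (2 * T) + 2 * T := by rw [hAa]; noncomm_ring
      _ = b * C * a + 1 := by rw [h2T]; noncomm_ring

/-- Howe's composition formula for the Cayley transform.  We state it for an
arbitrary (possibly noncommutative) `ℝ`-algebra `R`, which covers in
particular the rings of square matrices over `ℝ` and `ℂ` and `ℍ`. -/
theorem stmt_15 {R : Type*} [Ring R] [Algebra ℝ R] (x y : R)
    (hx : IsUnit (x - 1)) (hy : IsUnit (y - 1)) (hxy : IsUnit (x + y)) :
    IsUnit (cayley x * cayley y - 1) ∧
      cayley (cayley x * cayley y) =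
        (y - 1) * Ring.inverse (x + y) * (x - 1) + 1 := by
  have h2 : IsUnit (2:R) := by
    have : IsUnit ((algebraMap ℝ R) 2) := (isUnit_iff_ne_zero.mpr two_ne_zero).map _
    rwa [map_ofNat] at this
  set A := Ring.inverse (x - 1) with hA
  set B := Ring.inverse (y - 1) with hB
  set C := Ring.inverse (x + y) with hC
  set T := Ring.inverse (2:R) with hT
  have hs : (x - 1) + (y - 1) + 2 = x + y := by rw [← one_add_one_eq_two]; abel
  obtain ⟨k1, k2, k3⟩ := cayley_aux (x - 1) (y - 1) A B C T
    (Ring.mul_inverse_cancel _ hx) (Ring.inverse_mul_cancel _ hx)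
    (Ring.mul_inverse_cancel _ hy) (Ring.inverse_mul_cancel _ hy)
    (by rw [hs]; exact Ring.mul_inverse_cancel _ hxy)
    (by rw [hs]; exact Ring.inverse_mul_cancel _ hxy)
    (Ring.mul_inverse_cancel _ h2)
  have hcx : cayley x = 1 + 2 * A := by
    have e : x + 1 = (x - 1) + 2 := by rw [← one_add_one_eq_two]; abel
    rw [cayley, e, add_mul, Ring.mul_inverse_cancel _ hx, ← hA]
  have hcy : cayley y = 1 + 2 * B := by
    have e : y + 1 = (y - 1) + 2 := by rw [← one_add_one_eq_two]; abel
    rw [cayley, e, add_mul, Ring.mul_inverse_cancel _ hy, ← hB]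
  have hAu : IsUnit A := by
    rw [hA, ← hx.unit_spec, Ring.inverse_unit]; exact (hx.unit⁻¹).isUnit
  have hBu : IsUnit B := by
    rw [hB, ← hy.unit_spec, Ring.inverse_unit]; exact (hy.unit⁻¹).isUnit
  have hkey : cayley x * cayley y - 1 = 2 * (A * (((x - 1) + (y - 1) + 2) * B)) := by
    rw [hcx, hcy]; exact k1
  have hD : IsUnit (cayley x * cayley y - 1) := by
    rw [hkey]; exact h2.mul (hAu.mul ((hs ▸ hxy).mul hBu))
  refine ⟨hD, ?_⟩
  have hinv : Ring.inverse (cayley x * cayley y - 1)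
      = (y - 1) * (C * ((x - 1) * T)) := by
    have h1 : (cayley x * cayley y - 1) * ((y - 1) * (C * ((x - 1) * T))) = 1 := by
      rw [hkey]; exact k2
    calc Ring.inverse (cayley x * cayley y - 1)
        = Ring.inverse (cayley x * cayley y - 1) *
            ((cayley x * cayley y - 1) * ((y - 1) * (C * ((x - 1) * T)))) := by
          rw [h1, mul_one]
      _ = (Ring.inverse (cayley x * cayley y - 1) * (cayley x * cayley y - 1)) *
            ((y - 1) * (C * ((x - 1) * T))) := by rw [mul_assoc]
      _ = (y - 1) * (C * ((x - 1) * T)) := by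
          rw [Ring.inverse_mul_cancel _ hD, one_mul]
  rw [cayley, hinv, hcx, hcy]
  exact k3
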